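/- Let (X,f) be a TDS, ψ ∈ C(X,ℝ) with ψ > 0. If P(φ − βψ) < 0 (classical pressure), then for every ε > 0, limsup_{T→∞} R_{ψ,T}(f, φ − βψ, ε) < ∞, where R_{ψ,T} is the supremum over (n,ε)-separated sets of Y_n = {x : S_nψ(x) > T} (n ∈ G_T) of the sum of exp(S_n(φ − βψ)). -/

import Mathlib

open MeasureTheory Filter Topology Set

variable {X : Type*}

/-- Birkhoff sum `S_n φ (x) = ∑_{i<n} φ(f^i x)`. -/
noncomputable def birkhoff (f : X → X) (φ : X → ℝ) (n : ℕ) (x : X) : ℝ :=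
  ∑ i ∈ Finset.range n, φ (f^[i] x)

/-- The `n`-th Bowen metric. -/
noncomputable def dynDist [MetricSpace X] (f : X → X) (n : ℕ) (x y : X) : ℝ :=
  ⨆ i : Fin n, dist (f^[(i : ℕ)] x) (f^[(i : ℕ)] y)

/-- `F` is an `(n,ε)`-spanning set of `Z`. -/
def IsSpanningSet [MetricSpace X] (f : X → X) (n : ℕ) (ε : ℝ) (Z : Set X) (F : Finset X) : Prop :=
  ∀ y ∈ Z, ∃ x ∈ F, dynDist f n x y ≤ ε

/-- `E` is `(n,ε)`-separated. -/
def IsSeparatedSet [MetricSpace X] (f : X → X) (n : ℕ) (ε : ℝ) (E : Finset X) : Prop :=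
  ∀ x ∈ E, ∀ y ∈ E, x ≠ y → ε < dynDist f n x y

/-- `S_T = {n : ∃ x, S_n ψ(x) ≤ T < S_{n+1} ψ(x)}`. -/
def STset (f : X → X) (ψ : X → ℝ) (T : ℝ) : Set ℕ :=
  {n | ∃ x : X, birkhoff f ψ n x ≤ T ∧ T < birkhoff f ψ (n + 1) x}

/-- `X_n = {x : S_n ψ(x) ≤ T < S_{n+1} ψ(x)}`. -/
def Xset (f : X → X) (ψ : X → ℝ) (T : ℝ) (n : ℕ) : Set X :=
  {x | birkhoff f ψ n x ≤ T ∧ T < birkhoff f ψ (n + 1) x}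

/-- `Q_{ψ,T}(f,φ,ε)`, the spanning-set quantity. -/
noncomputable def Qspan [MetricSpace X] (f : X → X) (φ ψ : X → ℝ) (T ε : ℝ) : ℝ :=
  sInf { r : ℝ | ∃ F : ℕ → Finset X,
    (∀ n ∈ STset f ψ T, IsSpanningSet f n ε (Xset f ψ T n) (F n)) ∧
    r = ∑' n : ℕ, Set.indicator (STset f ψ T)
        (fun n => ∑ x ∈ F n, Real.exp (birkhoff f φ n x)) n }

/-- `P_{ψ,T}(f,φ,ε)`, the separated-set quantity. -/
noncomputable def Psep [MetricSpace X] (f : X → X) (φ ψ : X → ℝ) (T ε : ℝ) : ℝ :=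
  sSup { r : ℝ | ∃ E : ℕ → Finset X,
    (∀ n ∈ STset f ψ T, (E n : Set X) ⊆ Xset f ψ T n ∧ IsSeparatedSet f n ε (E n)) ∧
    r = ∑' n : ℕ, Set.indicator (STset f ψ T)
        (fun n => ∑ x ∈ E n, Real.exp (birkhoff f φ n x)) n }

/-- The `ψ`-induced topological pressure of `φ`. -/
noncomputable def inducedPressure [MetricSpace X] (f : X → X) (φ ψ : X → ℝ) : EReal :=
  ⨆ (ε : ℝ) (_ : 0 < ε),
    Filter.limsup (fun T : ℝ => ((T⁻¹ * Real.log (Qspan f φ ψ T ε) : ℝ) : EReal)) atTop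

/-- Largest sum over `(n,ε)`-separated sets of `X`. -/
noncomputable def sepSum [MetricSpace X] (f : X → X) (φ : X → ℝ) (n : ℕ) (ε : ℝ) : ℝ :=
  sSup { r : ℝ | ∃ E : Finset X, IsSeparatedSet f n ε E ∧
    r = ∑ x ∈ E, Real.exp (birkhoff f φ n x) }

/-- The classical (Walters) topological pressure. -/
noncomputable def topPressure [MetricSpace X] (f : X → X) (φ : X → ℝ) : EReal :=
  ⨆ (ε : ℝ) (_ : 0 < ε),
    Filter.limsup (fun n : ℕ => (((n : ℝ)⁻¹ * Real.log (sepSum f φ n ε) : ℝ) : EReal)) atTop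

/-- `G_T = {n : ∃ x, S_n ψ(x) > T}`. -/
def GTset (f : X → X) (ψ : X → ℝ) (T : ℝ) : Set ℕ :=
  {n | ∃ x : X, T < birkhoff f ψ n x}

/-- `Y_n = {x : S_n ψ(x) > T}`. -/
def Yset (f : X → X) (ψ : X → ℝ) (T : ℝ) (n : ℕ) : Set X :=
  {x | T < birkhoff f ψ n x}

/-- `R_{ψ,T}(f,φ,ε)`: supremum over `(n,ε)`-separated subsets of `Y_n`, `n ∈ G_T`. -/
noncomputable def Rsep [MetricSpace X] (f : X → X) (φ ψ : X → ℝ) (T ε : ℝ) : ENNReal :=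
  ⨆ (E : ℕ → Finset X)
    (_ : ∀ n ∈ GTset f ψ T, (E n : Set X) ⊆ Yset f ψ T n ∧ IsSeparatedSet f n ε (E n)),
    ∑' n : ℕ, Set.indicator (GTset f ψ T)
      (fun n => ENNReal.ofReal (∑ x ∈ E n, Real.exp (birkhoff f φ n x))) n

/-- Cardinality of `(n,ε)`-separated sets is uniformly bounded on a compact space. -/
lemma sep_card_bound [MetricSpace X] [CompactSpace X] (f : X → X) (n : ℕ) {ε : ℝ}
    (hε : 0 < ε) : ∃ N : ℕ, ∀ E : Finset X, IsSeparatedSet f n ε E → E.card ≤ N := by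
  have hc : TotallyBounded (Set.univ : Set (Fin n → X)) := isCompact_univ.totallyBounded
  obtain ⟨t, htf, htc⟩ := Metric.totallyBounded_iff.mp hc (ε / 2) (by positivity)
  set g : X → (Fin n → X) := fun x i => f^[(i : ℕ)] x with hg
  have hmem : ∀ x : X, ∃ y ∈ t, g x ∈ Metric.ball y (ε / 2) := by
    intro x
    have := htc (Set.mem_univ (g x))
    simpa using this
  choose ctr hctr hball using hmem
  refine ⟨htf.toFinset.card, fun E hE => ?_⟩
  apply Finset.card_le_card_of_injOn ctr
  · intro x _; simpa using hctr x
  · intro x hx y hy hxy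
    by_contra hne
    have hsep := hE x (by simpa using hx) y (by simpa using hy) hne
    have hdist : dist (g x) (g y) < ε := by
      calc dist (g x) (g y) ≤ dist (g x) (ctr x) + dist (ctr x) (g y) := dist_triangle _ _ _
        _ < ε / 2 + ε / 2 := by
            apply add_lt_add
            · exact Metric.mem_ball.mp (hball x)
            · rw [hxy, dist_comm]
              exact Metric.mem_ball.mp (hball y)
        _ = ε := by ring
    have hle : dynDist f n x y ≤ ε := by
      apply Real.iSup_le _ hε.le
      intro i
      calc dist (f^[(i : ℕ)] x) (f^[(i : ℕ)] y) = dist (g x i) (g y i) := rfl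
        _ ≤ dist (g x) (g y) := dist_le_pi_dist (g x) (g y) i
        _ ≤ ε := hdist.le
    exact absurd hsep (not_lt.mpr hle)

/-- The defining set of `sepSum` is bounded above and contains `0`. -/
lemma sepSum_bdd [MetricSpace X] [CompactSpace X] [Nonempty X] (f : X → X) {φ : X → ℝ}
    (hφ : Continuous φ) (n : ℕ) {ε : ℝ} (hε : 0 < ε) :
    BddAbove { r : ℝ | ∃ E : Finset X, IsSeparatedSet f n ε E ∧
      r = ∑ x ∈ E, Real.exp (birkhoff f φ n x) } := by
  obtain ⟨N, hN⟩ := sep_card_bound f n hε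
  obtain ⟨x₀, -, hx₀⟩ := isCompact_univ.exists_isMaxOn Set.univ_nonempty
    (hφ.continuousOn (s := Set.univ))
  refine ⟨(N : ℝ) * Real.exp (n * φ x₀), ?_⟩
  rintro r ⟨E, hEsep, rfl⟩
  have hterm : ∀ x ∈ E, Real.exp (birkhoff f φ n x) ≤ Real.exp (n * φ x₀) := by
    intro x _
    apply Real.exp_le_exp.mpr
    have : birkhoff f φ n x ≤ ∑ _i ∈ Finset.range n, φ x₀ := by
      apply Finset.sum_le_sum
      intro i _
      exact hx₀ (Set.mem_univ _)
    simpa [mul_comm] using this.trans_eq (by simp [Finset.sum_const, mul_comm])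
  calc ∑ x ∈ E, Real.exp (birkhoff f φ n x) ≤ ∑ _x ∈ E, Real.exp (n * φ x₀) :=
        Finset.sum_le_sum hterm
    _ = (E.card : ℝ) * Real.exp (n * φ x₀) := by simp [Finset.sum_const, mul_comm]
    _ ≤ (N : ℝ) * Real.exp (n * φ x₀) := by
        apply mul_le_mul_of_nonneg_right _ (Real.exp_pos _).le
        exact_mod_cast hN E hEsep

lemma zero_mem_sepSum_set [MetricSpace X] (f : X → X) (φ : X → ℝ) (n : ℕ) (ε : ℝ) :
    (0 : ℝ) ∈ { r : ℝ | ∃ E : Finset X, IsSeparatedSet f n ε E ∧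
      r = ∑ x ∈ E, Real.exp (birkhoff f φ n x) } :=
  ⟨∅, fun x hx => absurd hx (by simp), by simp⟩

lemma sepSum_nonneg' [MetricSpace X] [CompactSpace X] [Nonempty X] (f : X → X) {φ : X → ℝ}
    (hφ : Continuous φ) (n : ℕ) {ε : ℝ} (hε : 0 < ε) : 0 ≤ sepSum f φ n ε :=
  le_csSup (sepSum_bdd f hφ n hε) (zero_mem_sepSum_set f φ n ε)

lemma le_sepSum' [MetricSpace X] [CompactSpace X] [Nonempty X] (f : X → X) {φ : X → ℝ}
    (hφ : Continuous φ) (n : ℕ) {ε : ℝ} (hε : 0 < ε) {E : Finset X}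
    (hE : IsSeparatedSet f n ε E) :
    ∑ x ∈ E, Real.exp (birkhoff f φ n x) ≤ sepSum f φ n ε :=
  le_csSup (sepSum_bdd f hφ n hε) ⟨E, hE, rfl⟩

/-- if `P(φ - βψ) < 0` then `limsup_T R_{ψ,T}(f, φ-βψ, ε) < ∞` for every `ε > 0`. -/
theorem stmt12 [MetricSpace X] [CompactSpace X] [Nonempty X]
    (f : X → X) (φ ψ : X → ℝ) (hf : Continuous f) (hφ : Continuous φ) (hψ : Continuous ψ)
    (hpos : ∀ x, 0 < ψ x) (β : ℝ)
    (hP : topPressure f (fun x => φ x - β * ψ x) < 0) :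
    ∀ ε : ℝ, 0 < ε →
      Filter.limsup (fun T : ℝ => Rsep f (fun x => φ x - β * ψ x) ψ T ε) atTop < ⊤ := by
  intro ε hε
  set g : X → ℝ := fun x => φ x - β * ψ x with hgdef
  have hg : Continuous g := hφ.sub (continuous_const.mul hψ)
  -- extract the pressure estimate for this ε
  have hlim : Filter.limsup
      (fun n : ℕ => (((n : ℝ)⁻¹ * Real.log (sepSum f g n ε) : ℝ) : EReal)) atTop < 0 := by
    refine lt_of_le_of_lt ?_ hP
    exact le_iSup₂ (f := fun (ε : ℝ) (_ : 0 < ε) =>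
      Filter.limsup (fun n : ℕ => (((n : ℝ)⁻¹ * Real.log (sepSum f g n ε) : ℝ) : EReal)) atTop)
      ε hε
  obtain ⟨c, hc1, hc2⟩ := EReal.exists_between_coe_real hlim
  have hc0 : c < 0 := by exact_mod_cast hc2
  have hev : ∀ᶠ n : ℕ in atTop,
      (((n : ℝ)⁻¹ * Real.log (sepSum f g n ε) : ℝ) : EReal) < (c : EReal) :=
    eventually_lt_of_limsup_lt hc1
  obtain ⟨N, hN⟩ := Filter.eventually_atTop.mp hev
  -- sepSum is eventually exponentially small
  have hbound : ∀ n : ℕ, n ≥ max N 1 → sepSum f g n ε ≤ Real.exp (c * n) := by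
    intro n hn
    have hn1 : 1 ≤ n := le_trans (le_max_right N 1) hn
    have hnpos : (0 : ℝ) < n := by exact_mod_cast hn1
    have h := hN n (le_trans (le_max_left N 1) hn)
    have hlt : (n : ℝ)⁻¹ * Real.log (sepSum f g n ε) < c := by exact_mod_cast h
    have hlog : Real.log (sepSum f g n ε) < c * n := by
      rw [inv_mul_lt_iff₀ hnpos] at hlt
      linarith [hlt]
    by_cases hs : 0 < sepSum f g n ε
    · exact ((Real.log_lt_iff_lt_exp hs).mp hlog).le
    · exact le_trans (not_lt.mp hs) (Real.exp_pos _).le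
  -- summability of sepSum
  have hnn : ∀ n : ℕ, 0 ≤ sepSum f g n ε := fun n => sepSum_nonneg' f hg n hε
  have hsum : Summable (fun n : ℕ => sepSum f g n ε) := by
    rw [← summable_nat_add_iff (max N 1)]
    have hs2 : Summable (fun n : ℕ => Real.exp c ^ n * Real.exp (c * (max N 1 : ℕ))) :=
      (summable_geometric_of_lt_one (Real.exp_pos c).le
        (Real.exp_lt_one_iff.mpr hc0)).mul_right _
    refine Summable.of_nonneg_of_le (fun n => hnn _) (fun n => ?_) hs2
    have := hbound (n + max N 1) (Nat.le_add_left _ _)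
    refine this.trans (le_of_eq ?_)
    rw [← Real.exp_nat_mul, ← Real.exp_add]
    push_cast
    ring_nf
  -- the uniform bound
  set C : ENNReal := ENNReal.ofReal (∑' n : ℕ, sepSum f g n ε) with hC
  have hCtop : C < ⊤ := ENNReal.ofReal_lt_top
  have hRle : ∀ T : ℝ, Rsep f g ψ T ε ≤ C := by
    intro T
    rw [Rsep]
    apply iSup₂_le
    intro E hE
    have h1 : ∑' n : ℕ, Set.indicator (GTset f ψ T)
        (fun n => ENNReal.ofReal (∑ x ∈ E n, Real.exp (birkhoff f g n x))) n
        ≤ ∑' n : ℕ, ENNReal.ofReal (sepSum f g n ε) := by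
      apply ENNReal.tsum_le_tsum
      intro n
      by_cases hn : n ∈ GTset f ψ T
      · rw [Set.indicator_of_mem hn]
        exact ENNReal.ofReal_le_ofReal (le_sepSum' f hg n hε (hE n hn).2)
      · rw [Set.indicator_of_notMem hn]; exact zero_le
    have h2 : ∑' n : ℕ, ENNReal.ofReal (sepSum f g n ε) = C := by
      rw [hC, ENNReal.ofReal_tsum_of_nonneg hnn hsum]
    exact h1.trans h2.le
  calc Filter.limsup (fun T : ℝ => Rsep f g ψ T ε) atTop ≤ C :=
        Filter.limsup_le_of_le (by isBoundedDefault) (Filter.Eventually.of_forall hRle)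
    _ < ⊤ := hCtop
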